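/- Let L ≥ 1, K_B > 0, and for s ∈ {1,…,L} let m_s > 0, n_s > 0, ν_s > 0, T_s > 0, u_s ∈ ℝ³, and let f_s : ℝ³ → ℝ be integrable with ∫ f_s(v) dv = n_s, ∫ v f_s(v) dv = n_s u_s, and ∫ |v|² f_s(v) dv = n_s |u_s|² + 3 n_s K_B T_s/m_s, with |v|² f_s integrable. Define ū = (Σ_s ν_s m_s n_s u_s)/(Σ_s ν_s m_s n_s), T̄ = (Σ_s ν_s n_s (m_s(|u_s|² − |ū|²) + 3K_B T_s))/(3K_B Σ_s ν_s n_s), and M(v; a, b) = (2πb)^{−3/2} exp(−|v−a|²/(2b)). Then the GS relaxation operators conserve total kinetic energy: Σ_{s=1}^L ∫ (m_s |v|²/2) ν_s ( n_s M(v; ū, K_B T̄/m_s) − f_s(v) ) dv = 0. -/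

import Mathlib

open scoped BigOperators
open MeasureTheory

open Real

lemma int_sq_exp {c : ℝ} (hc : 0 < c) :
    ∫ x : ℝ, x ^ 2 * Real.exp (-c * x ^ 2)
      = c ^ (-(3:ℝ)/2) * Real.sqrt Real.pi / 2 := by
  have heven : ∀ x : ℝ, (-x) ^ 2 * Real.exp (-c * (-x) ^ 2)
      = x ^ 2 * Real.exp (-c * x ^ 2) := by intro x; ring_nf
  have hsplit : (∫ x : ℝ, x ^ 2 * Real.exp (-c * x ^ 2))
      = 2 * ∫ x in Set.Ioi (0:ℝ), x ^ 2 * Real.exp (-c * x ^ 2) := by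
    rw [← setIntegral_univ, ← Set.Iic_union_Ioi (a := (0:ℝ)),
      setIntegral_union (Set.Iic_disjoint_Ioi le_rfl) measurableSet_Ioi
        ((integrable_rpow_mul_exp_neg_mul_sq hc (by norm_num : (-1:ℝ) < 2)).congr
          (by filter_upwards with x; rw [show ((2:ℝ)) = ((2:ℕ):ℝ) by norm_num, Real.rpow_natCast])
          ).integrableOn
        ((integrable_rpow_mul_exp_neg_mul_sq hc (by norm_num : (-1:ℝ) < 2)).congr
          (by filter_upwards with x; rw [show ((2:ℝ)) = ((2:ℕ):ℝ) by norm_num, Real.rpow_natCast])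
          ).integrableOn]
    have : (∫ x in Set.Iic (0:ℝ), x ^ 2 * Real.exp (-c * x ^ 2))
        = ∫ x in Set.Ioi (0:ℝ), x ^ 2 * Real.exp (-c * x ^ 2) := by
      rw [show Set.Iic (0:ℝ) = Set.Iic (-(0:ℝ)) by norm_num,
        ← integral_comp_neg_Ioi]
      exact integral_congr_ae (by filter_upwards with x; rw [heven])
    rw [this]; ring
  have hIoi : (∫ x in Set.Ioi (0:ℝ), x ^ 2 * Real.exp (-c * x ^ 2))
      = c ^ (-(3:ℝ)/2) * (1/2) * Real.Gamma ((3:ℝ)/2) := by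
    have h := integral_rpow_mul_exp_neg_mul_rpow (p := 2) (q := 2)
      (by norm_num : (0:ℝ) < 2) (by norm_num : (-1:ℝ) < 2) hc
    have h2 : (∫ x in Set.Ioi (0:ℝ), x ^ (2:ℝ) * Real.exp (-c * x ^ (2:ℝ)))
        = ∫ x in Set.Ioi (0:ℝ), x ^ 2 * Real.exp (-c * x ^ 2) := by
      refine setIntegral_congr_fun measurableSet_Ioi (fun x hx => ?_)
      norm_num [show ((2:ℝ)) = ((2:ℕ):ℝ) by norm_num, Real.rpow_natCast]
    rw [← h2, h]
    norm_num
  have hGamma : Real.Gamma ((3:ℝ)/2) = Real.sqrt Real.pi / 2 := by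
    rw [show ((3:ℝ)/2) = 1/2 + 1 by norm_num, Real.Gamma_add_one (by norm_num),
      Real.Gamma_one_half_eq]
    ring
  rw [hsplit, hIoi, hGamma]; ring

lemma integrable_sq_mul_gauss {c : ℝ} (hc : 0 < c) :
    Integrable fun x : ℝ => x ^ 2 * Real.exp (-c * x ^ 2) :=
  (integrable_rpow_mul_exp_neg_mul_sq hc (by norm_num : (-1:ℝ) < 2)).congr
    (by filter_upwards with x
        norm_num [show ((2:ℝ)) = ((2:ℕ):ℝ) by norm_num, Real.rpow_natCast])

lemma int_odd_gauss {c : ℝ} : ∫ x : ℝ, x * Real.exp (-c * x ^ 2) = 0 := by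
  have h : (∫ x : ℝ, -x * Real.exp (-c * (-x) ^ 2)) = ∫ x : ℝ, x * Real.exp (-c * x ^ 2) := by
    exact integral_neg_eq_self (fun x : ℝ => x * Real.exp (-c * x ^ 2)) (volume : Measure ℝ)
  have h2 : (∫ x : ℝ, -x * Real.exp (-c * (-x) ^ 2))
      = -∫ x : ℝ, x * Real.exp (-c * x ^ 2) := by
    rw [← integral_neg]; congr 1; funext x; ring_nf
  linarith [h, h2]

lemma gauss1_int {b : ℝ} (hb : 0 < b) (α : ℝ) :
    Integrable (fun x : ℝ => Real.exp (-(x - α) ^ 2 / (2*b))) := by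
  have hc : (0:ℝ) < 1/(2*b) := by positivity
  have h := (integrable_exp_neg_mul_sq hc).comp_sub_right α
  refine h.congr ?_
  filter_upwards with x
  congr 1
  field_simp

lemma rpow_half_aux {b : ℝ} (hb : 0 < b) :
    ((1:ℝ)/(2*b)) ^ (-(3:ℝ)/2) = 2*b*Real.sqrt (2*b) := by
  have h2b : (0:ℝ) < 2*b := by positivity
  rw [show (-(3:ℝ)/2) = -((3:ℝ)/2) by norm_num,
    Real.rpow_neg (by positivity), Real.div_rpow zero_le_one h2b.le,
    Real.one_rpow, one_div, inv_inv,
    show ((3:ℝ)/2) = 1 + (1/2 : ℝ) by norm_num,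
    Real.rpow_add h2b, Real.rpow_one, ← Real.sqrt_eq_rpow]

lemma sqrt_2pib {b : ℝ} (hb : 0 < b) :
    Real.sqrt (2*b) * Real.sqrt Real.pi = Real.sqrt (2*Real.pi*b) := by
  rw [← Real.sqrt_mul (by positivity)]
  congr 1; ring

lemma gauss1_eval {b : ℝ} (hb : 0 < b) (α : ℝ) :
    ∫ x : ℝ, Real.exp (-(x - α) ^ 2 / (2*b)) = Real.sqrt (2*Real.pi*b) := by
  have hc : (0:ℝ) < 1/(2*b) := by positivity
  have h1 : (∫ x : ℝ, Real.exp (-(x - α) ^ 2 / (2*b)))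
      = ∫ x : ℝ, (fun y : ℝ => Real.exp (-(1/(2*b)) * y ^ 2)) (x - α) := by
    congr 1; funext x; congr 1; field_simp
  rw [h1, integral_sub_right_eq_self (fun y : ℝ => Real.exp (-(1/(2*b)) * y ^ 2)) α,
    integral_gaussian]
  congr 1
  field_simp

lemma gauss2_shift_eq {b : ℝ} (hb : 0 < b) (α : ℝ) : ∀ x : ℝ,
    x ^ 2 * Real.exp (-(x - α) ^ 2 / (2*b))
      = (fun y : ℝ => (y + α) ^ 2 * Real.exp (-(1/(2*b)) * y ^ 2)) (x - α) := by
  intro x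
  simp only [sub_add_cancel]
  congr 1
  field_simp

lemma gauss2_unshifted_int {b : ℝ} (hb : 0 < b) (α : ℝ) :
    Integrable (fun y : ℝ => (y + α) ^ 2 * Real.exp (-(1/(2*b)) * y ^ 2)) := by
  have hc : (0:ℝ) < 1/(2*b) := by positivity
  have h := ((integrable_sq_mul_gauss hc).add
      (((integrable_mul_exp_neg_mul_sq hc).const_mul (2*α)))).add
      ((integrable_exp_neg_mul_sq hc).const_mul (α^2))
  refine h.congr ?_
  filter_upwards with y
  simp only [Pi.add_apply]
  ring

lemma gauss2_int {b : ℝ} (hb : 0 < b) (α : ℝ) :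
    Integrable (fun x : ℝ => x ^ 2 * Real.exp (-(x - α) ^ 2 / (2*b))) := by
  have h := (gauss2_unshifted_int hb α).comp_sub_right α
  exact h.congr (by filter_upwards with x; exact (gauss2_shift_eq hb α x).symm)

lemma gauss2_eval {b : ℝ} (hb : 0 < b) (α : ℝ) :
    ∫ x : ℝ, x ^ 2 * Real.exp (-(x - α) ^ 2 / (2*b))
      = (α ^ 2 + b) * Real.sqrt (2*Real.pi*b) := by
  have hc : (0:ℝ) < 1/(2*b) := by positivity
  have h1 : (∫ x : ℝ, x ^ 2 * Real.exp (-(x - α) ^ 2 / (2*b)))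
      = ∫ y : ℝ, (y + α) ^ 2 * Real.exp (-(1/(2*b)) * y ^ 2) := by
    rw [show (fun x : ℝ => x ^ 2 * Real.exp (-(x - α) ^ 2 / (2*b)))
        = fun x : ℝ => (fun y : ℝ => (y + α) ^ 2 * Real.exp (-(1/(2*b)) * y ^ 2)) (x - α)
      from funext (gauss2_shift_eq hb α)]
    exact integral_sub_right_eq_self (μ := volume)
      (fun y : ℝ => (y + α) ^ 2 * Real.exp (-(1/(2*b)) * y ^ 2)) α
  have h2 : (fun y : ℝ => (y + α) ^ 2 * Real.exp (-(1/(2*b)) * y ^ 2))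
      = fun y : ℝ => (y ^ 2 * Real.exp (-(1/(2*b)) * y ^ 2)
          + (2*α) * (y * Real.exp (-(1/(2*b)) * y ^ 2)))
          + (α^2) * Real.exp (-(1/(2*b)) * y ^ 2) := by
    funext y; ring
  have hA : Integrable (fun y : ℝ => y ^ 2 * Real.exp (-(1/(2*b)) * y ^ 2)) :=
    integrable_sq_mul_gauss hc
  have hB : Integrable (fun y : ℝ => (2*α) * (y * Real.exp (-(1/(2*b)) * y ^ 2))) :=
    (integrable_mul_exp_neg_mul_sq hc).const_mul (2*α)
  have hC : Integrable (fun y : ℝ => (α^2) * Real.exp (-(1/(2*b)) * y ^ 2)) :=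
    (integrable_exp_neg_mul_sq hc).const_mul (α^2)
  have hAB : Integrable (fun y : ℝ => y ^ 2 * Real.exp (-(1/(2*b)) * y ^ 2)
      + (2*α) * (y * Real.exp (-(1/(2*b)) * y ^ 2))) := hA.add hB
  rw [h1, h2, integral_add hAB hC, integral_add hA hB,
    int_sq_exp hc, integral_const_mul, integral_const_mul, int_odd_gauss,
    integral_gaussian, rpow_half_aux hb]
  have hpi : (Real.pi / (1/(2*b))) = 2*Real.pi*b := by field_simp
  rw [hpi]
  have := sqrt_2pib hb
  nlinarith [Real.sqrt_nonneg (2*Real.pi*b), Real.sqrt_nonneg (2*b), Real.sqrt_nonneg Real.pi]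

lemma coord_norm_sub (x : Fin 3 → ℝ) (a : EuclideanSpace ℝ (Fin 3)) :
    ‖(MeasurableEquiv.toLp 2 (Fin 3 → ℝ)).symm.symm x - a‖^2
      = ∑ i, (x i - a i)^2 := by
  simp only [MeasurableEquiv.symm_symm, MeasurableEquiv.coe_toLp,
    EuclideanSpace.norm_eq]
  rw [Real.sq_sqrt (Finset.sum_nonneg fun i _ => by positivity)]
  refine Finset.sum_congr rfl fun i _ => ?_
  simp [PiLp.sub_apply, Real.norm_eq_abs, sq_abs]

lemma coord_norm (x : Fin 3 → ℝ) :
    ‖(MeasurableEquiv.toLp 2 (Fin 3 → ℝ)).symm.symm x‖^2 = ∑ i, (x i)^2 := by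
  have := coord_norm_sub x 0
  simpa using this


lemma enorm_sq (w : EuclideanSpace ℝ (Fin 3)) : ‖w‖^2 = ∑ i, (w i)^2 := by
  rw [EuclideanSpace.norm_eq, Real.sq_sqrt (Finset.sum_nonneg fun i _ => by positivity)]
  simp [sq_abs]

lemma transfer_integral (g : EuclideanSpace ℝ (Fin 3) → ℝ) :
    ∫ v, g v = ∫ x : Fin 3 → ℝ, g ((MeasurableEquiv.toLp 2 (Fin 3 → ℝ)).symm.symm x) :=
  ((((EuclideanSpace.volume_preserving_symm_measurableEquiv_toLp (Fin 3)).symm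
    (MeasurableEquiv.toLp 2 (Fin 3 → ℝ)).symm)).integral_comp
    (MeasurableEquiv.measurableEmbedding _) g).symm

lemma transfer_integrable (g : EuclideanSpace ℝ (Fin 3) → ℝ)
    (h : Integrable (fun x : Fin 3 → ℝ =>
      g ((MeasurableEquiv.toLp 2 (Fin 3 → ℝ)).symm.symm x))) : Integrable g := by
  rw [← MeasurePreserving.integrable_comp_emb
    ((EuclideanSpace.volume_preserving_symm_measurableEquiv_toLp (Fin 3)).symm
      (MeasurableEquiv.toLp 2 (Fin 3 → ℝ)).symm)
    (MeasurableEquiv.measurableEmbedding _)]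
  exact h

section Elevel
variable {b : ℝ} (a : EuclideanSpace ℝ (Fin 3))

lemma exp_coord (hb : 0 < b) (x : Fin 3 → ℝ) :
    Real.exp (-‖(MeasurableEquiv.toLp 2 (Fin 3 → ℝ)).symm.symm x - a‖^2 / (2*b))
      = ∏ i, Real.exp (-(x i - a i)^2 / (2*b)) := by
  rw [coord_norm_sub, ← Real.exp_sum]
  congr 1
  rw [neg_div, Finset.sum_div, ← Finset.sum_neg_distrib]
  simp [neg_div]

lemma E_exp_int (hb : 0 < b) :
    Integrable (fun v : EuclideanSpace ℝ (Fin 3) => Real.exp (-‖v - a‖^2 / (2*b))) := by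
  refine transfer_integrable _ ?_
  refine (Integrable.fintype_prod (f := fun i (t : ℝ) =>
    Real.exp (-(t - a i)^2/(2*b))) (fun i => gauss1_int hb (a i))).congr ?_
  filter_upwards with x
  exact (exp_coord a hb x).symm

lemma E_exp_eval (hb : 0 < b) :
    ∫ v : EuclideanSpace ℝ (Fin 3), Real.exp (-‖v - a‖^2 / (2*b))
      = (2*Real.pi*b) ^ ((3:ℝ)/2) := by
  rw [transfer_integral]
  have h1 : (∫ x : Fin 3 → ℝ,
      Real.exp (-‖(MeasurableEquiv.toLp 2 (Fin 3 → ℝ)).symm.symm x - a‖^2 / (2*b)))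
      = ∫ x : Fin 3 → ℝ, ∏ i, Real.exp (-(x i - a i)^2 / (2*b)) := by
    congr 1; funext x; exact exp_coord a hb x
  rw [h1, integral_fintype_prod_volume_eq_prod (f := fun i (t : ℝ) => Real.exp (-(t - a i)^2/(2*b)))]
  have h2 : ∀ i : Fin 3, (∫ t : ℝ, Real.exp (-(t - a i)^2/(2*b))) = Real.sqrt (2*Real.pi*b) :=
    fun i => gauss1_eval hb (a i)
  rw [Finset.prod_congr rfl (fun i _ => h2 i), Finset.prod_const]
  have hpos : (0:ℝ) < 2*Real.pi*b := by positivity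
  rw [Real.sqrt_eq_rpow]
  rw [show (Finset.univ : Finset (Fin 3)).card = 3 from rfl,
    ← Real.rpow_natCast ((2*Real.pi*b) ^ ((1:ℝ)/2)) 3, ← Real.rpow_mul hpos.le]
  norm_num
end Elevel

lemma sqrt_pow3 {c : ℝ} (hc : 0 ≤ c) : Real.sqrt c ^ 3 = c ^ ((3:ℝ)/2) := by
  rw [Real.sqrt_eq_rpow, ← Real.rpow_natCast (c ^ ((1:ℝ)/2)) 3, ← Real.rpow_mul hc]
  norm_num

section Esq
variable {b : ℝ} (a : EuclideanSpace ℝ (Fin 3))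

private noncomputable def g (a : EuclideanSpace ℝ (Fin 3)) (b : ℝ) (i j : Fin 3) (t : ℝ) : ℝ :=
  if j = i then t^2 * Real.exp (-(t - a j)^2/(2*b)) else Real.exp (-(t - a j)^2/(2*b))

lemma hg_int (hb : 0 < b) (i j : Fin 3) : Integrable (g a b i j) := by
  unfold g
  split_ifs
  · exact gauss2_int hb (a j)
  · exact gauss1_int hb (a j)

lemma hP_int (hb : 0 < b) (i : Fin 3) :
    Integrable (fun x : Fin 3 → ℝ => ∏ j, g a b i j (x j)) :=
  Integrable.fintype_prod (fun j => hg_int a hb i j)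

lemma hP_eval (hb : 0 < b) (i : Fin 3) :
    ∫ x : Fin 3 → ℝ, ∏ j, g a b i j (x j)
      = ((a i)^2 + b) * Real.sqrt (2*Real.pi*b) ^ 3 := by
  rw [integral_fintype_prod_volume_eq_prod (f := g a b i)]
  have h : ∀ j, (∫ t : ℝ, g a b i j t)
      = if j = i then ((a j)^2 + b) * Real.sqrt (2*Real.pi*b) else Real.sqrt (2*Real.pi*b) := by
    intro j
    by_cases h : j = i <;> simp [g, h, gauss2_eval hb, gauss1_eval hb]
  rw [Finset.prod_congr rfl (fun j _ => h j)]
  fin_cases i <;> simp [Fin.prod_univ_three] <;> ring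

lemma hpt (x : Fin 3 → ℝ) :
    (∑ i, (x i)^2) * ∏ j, Real.exp (-(x j - a j)^2/(2*b))
      = ∑ i, ∏ j, g a b i j (x j) := by
  simp only [g, Fin.sum_univ_three, Fin.prod_univ_three]
  norm_num [Fin.ext_iff]
  ring

lemma E_sq_int (hb : 0 < b) :
    Integrable (fun v : EuclideanSpace ℝ (Fin 3) => ‖v‖^2 * Real.exp (-‖v - a‖^2 / (2*b))) := by
  refine transfer_integrable _ ?_
  refine (integrable_finset_sum Finset.univ
    (fun i _ => hP_int a hb i)).congr ?_
  filter_upwards with x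
  rw [← hpt a x, coord_norm, exp_coord a hb x]

lemma E_sq_eval (hb : 0 < b) :
    ∫ v : EuclideanSpace ℝ (Fin 3), ‖v‖^2 * Real.exp (-‖v - a‖^2 / (2*b))
      = (‖a‖^2 + 3*b) * (2*Real.pi*b) ^ ((3:ℝ)/2) := by
  rw [transfer_integral]
  have h1 : (∫ x : Fin 3 → ℝ,
      ‖(MeasurableEquiv.toLp 2 (Fin 3 → ℝ)).symm.symm x‖^2
        * Real.exp (-‖(MeasurableEquiv.toLp 2 (Fin 3 → ℝ)).symm.symm x - a‖^2 / (2*b)))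
      = ∫ x : Fin 3 → ℝ, ∑ i, ∏ j, g a b i j (x j) := by
    congr 1; funext x
    rw [coord_norm, exp_coord a hb x, hpt a x]
  rw [h1, integral_finset_sum Finset.univ (fun i _ => hP_int a hb i),
    Finset.sum_congr rfl (fun i _ => hP_eval a hb i)]
  have hpos : (0:ℝ) ≤ 2*Real.pi*b := by positivity
  have h2 : ∑ i : Fin 3, ((a i)^2 + b) * Real.sqrt (2*Real.pi*b) ^ 3
      = ((∑ i : Fin 3, (a i)^2) + 3*b) * Real.sqrt (2*Real.pi*b) ^ 3 := by
    rw [Fin.sum_univ_three, Fin.sum_univ_three]; ring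
  rw [h2, ← enorm_sq a, sqrt_pow3 hpos]
end Esq

theorem gs_total_energy_conservation
    (L : ℕ) (hL : 1 ≤ L) (KB : ℝ) (hKB : 0 < KB)
    (m n ν T : Fin L → ℝ) (u : Fin L → EuclideanSpace ℝ (Fin 3))
    (hm : ∀ s, 0 < m s) (hn : ∀ s, 0 < n s) (hν : ∀ s, 0 < ν s) (hT : ∀ s, 0 < T s)
    (f : Fin L → EuclideanSpace ℝ (Fin 3) → ℝ)
    (hfint : ∀ s, Integrable (f s))
    (hfvint : ∀ s, Integrable (fun v => f s v • v))
    (hfv2int : ∀ s, Integrable (fun v => ‖v‖ ^ 2 * f s v))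
    (hf0 : ∀ s, ∫ v, f s v = n s)
    (hf1 : ∀ s, (∫ v, f s v • v) = n s • u s)
    (hf2 : ∀ s, ∫ v, ‖v‖ ^ 2 * f s v = n s * ‖u s‖ ^ 2 + 3 * n s * KB * T s / m s)
    (Mx : EuclideanSpace ℝ (Fin 3) → EuclideanSpace ℝ (Fin 3) → ℝ → ℝ)
    (hMx : ∀ v a b, Mx v a b = (2 * Real.pi * b) ^ (-(3 : ℝ) / 2)
      * Real.exp (-‖v - a‖ ^ 2 / (2 * b)))
    (ubar : EuclideanSpace ℝ (Fin 3))
    (hubar : ubar = (1 / ∑ s, ν s * m s * n s) • ∑ s, (ν s * m s * n s) • u s)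
    (Tbar : ℝ)
    (hTbar : Tbar = (∑ s, ν s * n s * (m s * (‖u s‖ ^ 2 - ‖ubar‖ ^ 2) + 3 * KB * T s))
      / (3 * KB * ∑ s, ν s * n s)) :
    ∑ s, (∫ v, m s * ‖v‖ ^ 2 / 2 * (ν s * (n s * Mx v ubar (KB * Tbar / m s) - f s v)))
      = 0 := by
  have hne : Nonempty (Fin L) := ⟨⟨0, by omega⟩⟩
  have hW : 0 < ∑ s, ν s * m s * n s :=
    Finset.sum_pos (fun s _ => mul_pos (mul_pos (hν s) (hm s)) (hn s)) Finset.univ_nonempty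
  have hS3 : 0 < ∑ s, ν s * n s :=
    Finset.sum_pos (fun s _ => mul_pos (hν s) (hn s)) Finset.univ_nonempty
  -- Jensen-type inequality
  set w : Fin L → ℝ := fun s => ν s * m s * n s with hw
  have hsum : ∑ s, w s • u s = (∑ s, w s) • ubar := by
    rw [hubar, smul_smul, mul_one_div, div_self hW.ne', one_smul]
  have hJ : (∑ s, w s) * ‖ubar‖^2 ≤ ∑ s, w s * ‖u s‖^2 := by
    have hkey : ∑ s, w s * ‖u s - ubar‖^2
        = (∑ s, w s * ‖u s‖^2) - (∑ s, w s) * ‖ubar‖^2 := by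
      have hterm : ∀ s, w s * ‖u s - ubar‖^2
          = w s * ‖u s‖^2 - 2 * (inner ℝ (w s • u s) ubar : ℝ) + w s * ‖ubar‖^2 := by
        intro s
        rw [norm_sub_sq_real, real_inner_smul_left]
        ring
      rw [Finset.sum_congr rfl (fun s _ => hterm s), Finset.sum_add_distrib,
        Finset.sum_sub_distrib, ← Finset.mul_sum, ← sum_inner, hsum, real_inner_smul_left,
        real_inner_self_eq_norm_sq]
      rw [show (∑ s, w s * ‖ubar‖^2) = (∑ s, w s) * ‖ubar‖^2 from (Finset.sum_mul ..).symm]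
      ring
    have hpos : 0 ≤ ∑ s, w s * ‖u s - ubar‖^2 :=
      Finset.sum_nonneg fun s _ => mul_nonneg
        (le_of_lt (by simp only [hw]; exact mul_pos (mul_pos (hν s) (hm s)) (hn s)))
        (sq_nonneg _)
    linarith [hkey ▸ hpos]
  -- positivity of Tbar
  have hNpos : 0 < ∑ s, ν s * n s * (m s * (‖u s‖ ^ 2 - ‖ubar‖ ^ 2) + 3 * KB * T s) := by
    have hsplit : (∑ s, ν s * n s * (m s * (‖u s‖ ^ 2 - ‖ubar‖ ^ 2) + 3 * KB * T s))
        = ((∑ s, w s * ‖u s‖^2) - (∑ s, w s) * ‖ubar‖^2)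
          + 3 * KB * (∑ s, ν s * n s * T s) := by
      rw [Finset.sum_mul, Finset.mul_sum, ← Finset.sum_sub_distrib, ← Finset.sum_add_distrib]
      exact Finset.sum_congr rfl fun s _ => by simp only [hw]; ring
    have hTsum : 0 < ∑ s, ν s * n s * T s :=
      Finset.sum_pos (fun s _ => mul_pos (mul_pos (hν s) (hn s)) (hT s)) Finset.univ_nonempty
    rw [hsplit]
    nlinarith [hJ, hTsum]
  have hTpos : 0 < Tbar := by
    rw [hTbar]; exact div_pos hNpos (mul_pos (mul_pos zero_lt_three hKB) hS3)
  -- evaluate each integral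
  have hint_s : ∀ s, (∫ v, m s * ‖v‖ ^ 2 / 2
        * (ν s * (n s * Mx v ubar (KB * Tbar / m s) - f s v)))
      = (m s * ν s * n s / 2) * (‖ubar‖^2 + 3*(KB * Tbar / m s))
        - (m s * ν s / 2) * (n s * ‖u s‖ ^ 2 + 3 * n s * KB * T s / m s) := by
    intro s
    set bb := KB * Tbar / m s with hbb
    have hbpos : 0 < bb := by
      rw [hbb]; exact div_pos (mul_pos hKB hTpos) (hm s)
    set A := (2 * Real.pi * bb) ^ (-(3 : ℝ) / 2) with hA
    set B := (2 * Real.pi * bb) ^ ((3 : ℝ) / 2) with hB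
    have hABone : A * B = 1 := by
      rw [hA, hB, ← Real.rpow_add (mul_pos (mul_pos two_pos Real.pi_pos) hbpos)]
      norm_num
    have hptw : ∀ v : EuclideanSpace ℝ (Fin 3),
        m s * ‖v‖ ^ 2 / 2 * (ν s * (n s * Mx v ubar bb - f s v))
        = (m s * ν s * n s * A / 2) * (‖v‖ ^ 2 * Real.exp (-‖v - ubar‖ ^ 2 / (2 * bb)))
          - (m s * ν s / 2) * (‖v‖ ^ 2 * f s v) := by
      intro v
      rw [hMx v ubar bb]
      ring
    rw [show (fun v => m s * ‖v‖ ^ 2 / 2 * (ν s * (n s * Mx v ubar bb - f s v)))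
        = fun v => (m s * ν s * n s * A / 2)
            * (‖v‖ ^ 2 * Real.exp (-‖v - ubar‖ ^ 2 / (2 * bb)))
          - (m s * ν s / 2) * (‖v‖ ^ 2 * f s v) from funext hptw]
    rw [integral_sub ((E_sq_int ubar hbpos).const_mul _) ((hfv2int s).const_mul _),
      integral_const_mul, integral_const_mul, E_sq_eval ubar hbpos, hf2 s]
    rw [← hB]
    linear_combination ((m s * ν s * n s / 2) * (‖ubar‖^2 + 3*bb)) * hABone
  -- final algebra
  have hkey : (∑ s, ν s * n s * (m s * (‖u s‖ ^ 2 - ‖ubar‖ ^ 2) + 3 * KB * T s))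
      = 3 * KB * Tbar * (∑ s, ν s * n s) := by
    rw [hTbar]
    field_simp
  calc ∑ s, (∫ v, m s * ‖v‖ ^ 2 / 2 * (ν s * (n s * Mx v ubar (KB * Tbar / m s) - f s v)))
      = ∑ s, ((-(1/2)) * (ν s * n s * (m s * (‖u s‖ ^ 2 - ‖ubar‖ ^ 2) + 3 * KB * T s))
          + (3 * KB / 2) * Tbar * (ν s * n s)) := by
        refine Finset.sum_congr rfl fun s _ => ?_
        rw [hint_s s]
        field_simp [(hm s).ne']
        ring
    _ = (-(1/2)) * (∑ s, ν s * n s * (m s * (‖u s‖ ^ 2 - ‖ubar‖ ^ 2) + 3 * KB * T s))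
          + (3 * KB / 2) * Tbar * (∑ s, ν s * n s) := by
        rw [Finset.sum_add_distrib, ← Finset.mul_sum, ← Finset.mul_sum]
    _ = 0 := by rw [hkey]; ring
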